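/- The formulas □_i(p ∨ q) ∧ □_i(¬p ∨ q) ∧ ◇_i ¬q and □_i q ∧ ◇_i ⊥ are logically equivalent in K_n, and the latter is a logically separable epistemic term. -/

import Mathlib

universe u v

inductive Fm (A P : Type) : Type
  | tru : Fm A P
  | var : P → Fm A P
  | neg : Fm A P → Fm A P
  | and : Fm A P → Fm A P → Fm A P
  | box : A → Fm A P → Fm A P

namespace Fm
variable {A P : Type}
def or (φ ψ : Fm A P) : Fm A P := neg ((neg φ).and (neg ψ))
def bot : Fm A P := neg tru
def dia (i : A) (φ : Fm A P) : Fm A P := neg (box i (neg φ))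
end Fm

structure KM (A P : Type) where
  S : Type
  R : A → S → S → Prop
  V : S → P → Prop

variable {A P : Type}

def Sat (M : KM A P) : M.S → Fm A P → Prop
  | _, .tru => True
  | s, .var p => M.V s p
  | s, .neg φ => ¬ Sat M s φ
  | s, .and φ ψ => Sat M s φ ∧ Sat M s ψ
  | s, .box i φ => ∀ t, M.R i s t → Sat M t φ

def Satisfiable (φ : Fm A P) : Prop := ∃ (M : KM A P) (s : M.S), Sat M s φ

def Entails (φ ψ : Fm A P) : Prop := ∀ (M : KM A P) (s : M.S), Sat M s φ → Sat M s ψ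

def FEquiv (φ ψ : Fm A P) : Prop := Entails φ ψ ∧ Entails ψ φ

def IsProp : Fm A P → Prop
  | .tru => True
  | .var _ => True
  | .neg φ => IsProp φ
  | .and φ ψ => IsProp φ ∧ IsProp ψ
  | .box _ _ => False

def Basic (φ : Fm A P) : Prop :=
  IsProp φ ∨ (∃ i ψ, φ = Fm.box i ψ) ∨ (∃ i ψ, φ = Fm.dia i ψ)

def conj : List (Fm A P) → Fm A P
  | [] => Fm.tru
  | φ :: L => φ.and (conj L)

def disj : List (Fm A P) → Fm A P
  | [] => Fm.bot
  | φ :: L => φ.or (disj L)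

def EpTerm (L : List (Fm A P)) : Prop := ∀ c ∈ L, Basic c

def LogSep (L : List (Fm A P)) : Prop :=
  ∀ η : Fm A P, Basic η → Entails (conj L) η → ∃ α ∈ L, Entails α η

def fvars : Fm A P → Set P
  | .tru => ∅
  | .var p => {p}
  | .neg φ => fvars φ
  | .and φ ψ => fvars φ ∪ fvars ψ
  | .box _ φ => fvars φ

def fsize : Fm A P → ℕ
  | .tru => 1
  | .var _ => 1
  | .neg φ => fsize φ + 1
  | .and φ ψ => fsize φ + fsize ψ + 1
  | .box _ φ => fsize φ + 1

theorem example_equivalent_separable_term (p q : P) (hpq : p ≠ q) (i : A) :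
    let L : List (Fm A P) :=
      [Fm.box i ((Fm.var p).or (Fm.var q)),
       Fm.box i ((Fm.neg (Fm.var p)).or (Fm.var q)),
       Fm.dia i (Fm.neg (Fm.var q))]
    let L' : List (Fm A P) := [Fm.box i (Fm.var q), Fm.dia i Fm.bot]
    FEquiv (conj L) (conj L') ∧ EpTerm L' ∧ LogSep L' := by

  intro L L'
  have hdia : ∀ (M : KM A P) (s : M.S), ¬ Sat M s (Fm.dia i (Fm.bot (P := P))) := by
    intro M s h
    simp only [Fm.dia, Fm.bot, Sat] at h
    exact h (fun t _ ht => ht trivial)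
  have hL : ∀ (M : KM A P) (s : M.S), ¬ Sat M s (conj L) := by
    intro M s h
    simp only [L, conj, Sat, Fm.or, Fm.dia] at h
    obtain ⟨h1, h2, h3, -⟩ := h
    apply h3
    intro t hrt hq
    apply hq
    by_contra hnq
    exact h2 t hrt ⟨fun hp => h1 t hrt ⟨hp, hnq⟩, hnq⟩
  refine ⟨⟨fun M s h => absurd h (hL M s), fun M s h => absurd h.2.1 (hdia M s)⟩, ?_, ?_⟩
  · intro c hc
    simp only [L', List.mem_cons, List.mem_singleton] at hc
    rcases hc with rfl | rfl | h
    · exact Or.inr (Or.inl ⟨i, _, rfl⟩)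
    · exact Or.inr (Or.inr ⟨i, _, rfl⟩)
    · exact absurd h List.not_mem_nil
  · intro η _ _
    exact ⟨Fm.dia i Fm.bot, by simp [L'], fun M s h => absurd h (hdia M s)⟩
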